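/- Let (p_{i,j}) be a model with small steps whose kernel K(x,y) = Σ_{(i,j)} p_{i,j} x^{1−i} y^{1−j} − xy satisfies K(0,0) = 0 (equivalently p_{1,1} = 0) and (∂K/∂x)(0,0) ≠ 0 (equivalently p_{0,1} ≠ 0), and let X ∈ ℂ[[y]] with X(0) = 0 and K(X(y), y) = 0. Then for every bivariate formal power series G ∈ ℂ[[x,y]], the kernel K divides X(y)·y·G(X(y), y) − x·y·G(x,y) in ℂ[[x,y]]; moreover the quotient H ∈ ℂ[[x,y]], defined by K·H = X(y)·y·G(X(y),y) − x·y·G(x,y), satisfies H(x,0) = 0. -/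

import Mathlib

open Finset

/-- The set of possible small steps `{-1,0,1} × {-1,0,1}` (the step `(0,0)` is excluded
via the support condition of the model). -/
def SmallStepGrid : Finset (ℤ × ℤ) := ({-1, 0, 1} : Finset ℤ) ×ˢ ({-1, 0, 1} : Finset ℤ)

/-- A model with small steps: nonnegative weights `p i j` supported on
`{-1,0,1}² \ {(0,0)}` summing to `1`. -/
structure SmallStepModel where
  p : ℤ → ℤ → ℝ
  nonneg : ∀ u v, 0 ≤ p u v
  supp : ∀ u v, p u v ≠ 0 → ((u, v) ∈ SmallStepGrid ∧ (u, v) ≠ (0, 0))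
  sum_one : ∑ uv ∈ SmallStepGrid, p uv.1 uv.2 = 1

/-- Zero drift: both coordinates of the mean step vanish. -/
def SmallStepModel.ZeroDrift (M : SmallStepModel) : Prop :=
  (∑ uv ∈ SmallStepGrid, (uv.1 : ℝ) * M.p uv.1 uv.2 = 0) ∧
  (∑ uv ∈ SmallStepGrid, (uv.2 : ℝ) * M.p uv.1 uv.2 = 0)

/-- The cyclic list of the eight boundary weights. -/
def SmallStepModel.cyc (M : SmallStepModel) : Fin 8 → ℝ :=
  ![M.p 1 1, M.p 1 0, M.p 1 (-1), M.p 0 (-1), M.p (-1) (-1), M.p (-1) 0, M.p (-1) 1,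
    M.p 0 1]

/-- Non-degeneracy: the cyclic list of the eight weights contains no
three consecutive zeros. -/
def SmallStepModel.NonDegenerate (M : SmallStepModel) : Prop :=
  ∀ k : Fin 8, ¬(M.cyc k = 0 ∧ M.cyc (k + 1) = 0 ∧ M.cyc (k + 2) = 0)


/-- The kernel `K(x,y) = Σ_{(i,j)} p_{i,j} x^{1−i} y^{1−j} − xy` of the model, viewed as an
element of `ℂ[[x,y]]`. -/
noncomputable def kernelPS (M : SmallStepModel) : MvPowerSeries (Fin 2) ℂ :=
  (∑ uv ∈ SmallStepGrid, MvPowerSeries.C (σ := Fin 2) (R := ℂ) ((M.p uv.1 uv.2 : ℝ) : ℂ) *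
      MvPowerSeries.X 0 ^ (1 - uv.1).toNat * MvPowerSeries.X 1 ^ (1 - uv.2).toNat)
    - MvPowerSeries.X 0 * MvPowerSeries.X 1

/-- Formal substitution `F(X(y), y)` of a pair `(X(y), y)` into a bivariate power series
`F ∈ ℂ[[x,y]]`; this is the correct substitution whenever `X` has zero constant term,
since then the coefficient of `yⁿ` only receives contributions from monomials `x^a y^b`
with `a, b ≤ n`. -/
noncomputable def substXY (Xs : PowerSeries ℂ) (F : MvPowerSeries (Fin 2) ℂ) :
    PowerSeries ℂ :=
  PowerSeries.mk fun n => ∑ a ∈ Finset.range (n + 1), ∑ b ∈ Finset.range (n + 1),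
    MvPowerSeries.coeff (R := ℂ) (Finsupp.single 0 a + Finsupp.single 1 b) F *
      PowerSeries.coeff (R := ℂ) (n - b) (Xs ^ a)

/-- The embedding `ℂ[[y]] → ℂ[[x,y]]` sending a univariate series in `y` to the
corresponding bivariate series. -/
noncomputable def embedY (u : PowerSeries ℂ) : MvPowerSeries (Fin 2) ℂ :=
  fun e => if e 0 = 0 then PowerSeries.coeff (R := ℂ) (e 1) u else 0

namespace KernelAux

local notation "A" => PowerSeries ℂ
local notation "B" => PowerSeries (PowerSeries ℂ)

lemma fin2_decomp (e : Fin 2 →₀ ℕ) :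
    e = Finsupp.single 0 (e 0) + Finsupp.single 1 (e 1) := by
  ext i
  fin_cases i <;> simp [Finsupp.single_apply]

lemma pair_apply0 (s t : ℕ) :
    ((Finsupp.single (0 : Fin 2) s + Finsupp.single 1 t : Fin 2 →₀ ℕ)) 0 = s := by
  simp [Finsupp.single_apply]

lemma pair_apply1 (s t : ℕ) :
    ((Finsupp.single (0 : Fin 2) s + Finsupp.single 1 t : Fin 2 →₀ ℕ)) 1 = t := by
  simp [Finsupp.single_apply]

lemma single_eq_pair_iff (i s t : ℕ) :
    (Finsupp.single (0 : Fin 2) i = Finsupp.single 0 s + Finsupp.single 1 t) ↔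
      (i = s ∧ t = 0) := by
  constructor
  · intro h
    have h0 := congrArg (fun f : Fin 2 →₀ ℕ => f 0) h
    have h1 := congrArg (fun f : Fin 2 →₀ ℕ => f 1) h
    simp [Finsupp.single_apply] at h0 h1
    exact ⟨h0, h1.symm⟩
  · rintro ⟨rfl, rfl⟩
    simp

/-- The slice isomorphism `ℂ[[x,y]] → ℂ[[y]][[x]]`. -/
noncomputable def phi (F : MvPowerSeries (Fin 2) ℂ) : B :=
  PowerSeries.mk fun a => PowerSeries.mk fun b =>
    MvPowerSeries.coeff (R := ℂ) (Finsupp.single 0 a + Finsupp.single 1 b) F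

/-- The inverse slice map `ℂ[[y]][[x]] → ℂ[[x,y]]`. -/
noncomputable def psi (U : B) : MvPowerSeries (Fin 2) ℂ :=
  fun e => PowerSeries.coeff (R := ℂ) (e 1) (PowerSeries.coeff (R := PowerSeries ℂ) (e 0) U)

lemma coeff_phi (F : MvPowerSeries (Fin 2) ℂ) (a b : ℕ) :
    PowerSeries.coeff (R := ℂ) b (PowerSeries.coeff (R := PowerSeries ℂ) a (phi F)) =
      MvPowerSeries.coeff (R := ℂ) (Finsupp.single 0 a + Finsupp.single 1 b) F := by
  simp [phi, PowerSeries.coeff_mk]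

lemma coeff_psi (U : B) (e : Fin 2 →₀ ℕ) :
    MvPowerSeries.coeff (R := ℂ) e (psi U) =
      PowerSeries.coeff (R := ℂ) (e 1) (PowerSeries.coeff (R := PowerSeries ℂ) (e 0) U) := rfl

lemma psi_phi (F : MvPowerSeries (Fin 2) ℂ) : psi (phi F) = F := by
  funext e
  show PowerSeries.coeff (R := ℂ) (e 1) (PowerSeries.coeff (R := PowerSeries ℂ) (e 0) (phi F)) = F e
  rw [coeff_phi]
  conv_rhs => rw [fin2_decomp e]
  rfl

lemma phi_psi (U : B) : phi (psi U) = U := by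
  apply PowerSeries.ext; intro a
  apply PowerSeries.ext; intro b
  rw [coeff_phi, coeff_psi, pair_apply0, pair_apply1]

lemma psi_mul (U V : B) : psi (U * V) = psi U * psi V := by
  funext e
  have hR : (psi U * psi V) e = MvPowerSeries.coeff (R := ℂ) e (psi U * psi V) := rfl
  rw [hR, MvPowerSeries.coeff_mul]
  show PowerSeries.coeff (R := ℂ) (e 1) (PowerSeries.coeff (R := PowerSeries ℂ) (e 0) (U * V)) = _
  have lhs2 : PowerSeries.coeff (R := ℂ) (e 1) (PowerSeries.coeff (R := PowerSeries ℂ) (e 0) (U * V)) =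
      ∑ x ∈ Finset.HasAntidiagonal.antidiagonal (e 0) ×ˢ Finset.HasAntidiagonal.antidiagonal (e 1),
        PowerSeries.coeff (R := ℂ) x.2.1 (PowerSeries.coeff (R := PowerSeries ℂ) x.1.1 U) *
          PowerSeries.coeff (R := ℂ) x.2.2 (PowerSeries.coeff (R := PowerSeries ℂ) x.1.2 V) := by
    rw [Finset.sum_product, PowerSeries.coeff_mul, map_sum]
    exact Finset.sum_congr rfl fun p _ => PowerSeries.coeff_mul _ _ _
  rw [lhs2]
  refine Finset.sum_nbij'
    (i := fun x => (Finsupp.single (0:Fin 2) x.1.1 + Finsupp.single 1 x.2.1,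
                    Finsupp.single (0:Fin 2) x.1.2 + Finsupp.single 1 x.2.2))
    (j := fun p => ((p.1 0, p.2 0), (p.1 1, p.2 1))) ?_ ?_ ?_ ?_ ?_
  · intro x hx
    simp only [Finset.mem_product, Finset.HasAntidiagonal.mem_antidiagonal] at hx
    rw [Finset.HasAntidiagonal.mem_antidiagonal]
    conv_rhs => rw [fin2_decomp e]
    rw [← hx.1, ← hx.2, Finsupp.single_add, Finsupp.single_add]
    dsimp only
    abel
  · intro p hp
    have h := Finset.HasAntidiagonal.mem_antidiagonal.mp hp
    simp only [Finset.mem_product, Finset.HasAntidiagonal.mem_antidiagonal]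
    constructor
    · rw [← h]; simp
    · rw [← h]; simp
  · intro x _
    simp [pair_apply0, pair_apply1]
  · intro p _
    exact Prod.ext (fin2_decomp p.1).symm (fin2_decomp p.2).symm
  · intro x _
    rw [coeff_psi, coeff_psi, pair_apply0, pair_apply1, pair_apply0, pair_apply1]

lemma phi_sub (F G : MvPowerSeries (Fin 2) ℂ) : phi (F - G) = phi F - phi G := by
  apply PowerSeries.ext; intro a
  apply PowerSeries.ext; intro b
  simp [coeff_phi, map_sub]

lemma phi_mul (F G : MvPowerSeries (Fin 2) ℂ) : phi (F * G) = phi F * phi G := by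
  have h : F * G = psi (phi F) * psi (phi G) := by rw [psi_phi, psi_phi]
  rw [h, ← psi_mul, phi_psi]

lemma phi_embedY (u : A) : phi (embedY u) = PowerSeries.C (R := PowerSeries ℂ) u := by
  apply PowerSeries.ext; intro a
  apply PowerSeries.ext; intro b
  rw [coeff_phi, PowerSeries.coeff_C]
  show (embedY u) _ = _
  rw [embedY]
  by_cases h : a = 0 <;> simp [h, pair_apply0, pair_apply1]

lemma phi_X0 : phi (MvPowerSeries.X (0 : Fin 2) : MvPowerSeries (Fin 2) ℂ) = PowerSeries.X := by
  apply PowerSeries.ext; intro a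
  apply PowerSeries.ext; intro b
  rw [coeff_phi, MvPowerSeries.coeff_X, PowerSeries.coeff_X]
  have : (Finsupp.single (0:Fin 2) 1 : Fin 2 →₀ ℕ) = Finsupp.single 0 1 + Finsupp.single 1 0 := by simp
  rw [this]
  have hiff : (Finsupp.single (0:Fin 2) a + Finsupp.single 1 b =
      Finsupp.single (0:Fin 2) 1 + Finsupp.single 1 0) ↔ (a = 1 ∧ b = 0) := by
    constructor
    · intro h
      have h0 := congrArg (fun f : Fin 2 →₀ ℕ => f 0) h
      have h1 := congrArg (fun f : Fin 2 →₀ ℕ => f 1) h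
      simp [pair_apply0, pair_apply1] at h0 h1
      exact ⟨h0, h1⟩
    · rintro ⟨rfl, rfl⟩; rfl
  simp only [hiff]
  by_cases ha : a = 1 <;> by_cases hb : b = 0 <;>
    simp [ha, hb, PowerSeries.coeff_one]

lemma phi_X1 : phi (MvPowerSeries.X (1 : Fin 2) : MvPowerSeries (Fin 2) ℂ) =
    PowerSeries.C (R := PowerSeries ℂ) PowerSeries.X := by
  apply PowerSeries.ext; intro a
  apply PowerSeries.ext; intro b
  rw [coeff_phi, MvPowerSeries.coeff_X, PowerSeries.coeff_C]
  have : (Finsupp.single (1:Fin 2) 1 : Fin 2 →₀ ℕ) = Finsupp.single 0 0 + Finsupp.single 1 1 := by simp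
  rw [this]
  have hiff : (Finsupp.single (0:Fin 2) a + Finsupp.single 1 b =
      Finsupp.single (0:Fin 2) 0 + Finsupp.single 1 1) ↔ (a = 0 ∧ b = 1) := by
    constructor
    · intro h
      have h0 := congrArg (fun f : Fin 2 →₀ ℕ => f 0) h
      have h1 := congrArg (fun f : Fin 2 →₀ ℕ => f 1) h
      simp [pair_apply0, pair_apply1] at h0 h1
      exact ⟨h0, h1⟩
    · rintro ⟨rfl, rfl⟩; rfl
  simp only [hiff]
  by_cases ha : a = 0 <;> by_cases hb : b = 1 <;>
    simp [ha, hb, PowerSeries.coeff_X]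

/-- The evaluation `U(X(y))` for `U ∈ ℂ[[y]][[x]]`. -/
noncomputable def evB (Xs : A) (U : B) : A :=
  PowerSeries.mk fun n => ∑ a ∈ Finset.range (n + 1),
    PowerSeries.coeff (R := ℂ) n (PowerSeries.coeff (R := PowerSeries ℂ) a U * Xs ^ a)

lemma substXY_eq (Xs : A) (F : MvPowerSeries (Fin 2) ℂ) :
    substXY Xs F = evB Xs (phi F) := by
  apply PowerSeries.ext; intro n
  simp only [substXY, evB, PowerSeries.coeff_mk]
  refine Finset.sum_congr rfl fun a _ => ?_
  rw [PowerSeries.coeff_mul, Finset.Nat.sum_antidiagonal_eq_sum_range_succ_mk]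
  exact Finset.sum_congr rfl fun b _ => by rw [coeff_phi]

lemma coeff_mul_pow_eq_zero {Xs : A} (hX0 : PowerSeries.constantCoeff (R := ℂ) Xs = 0)
    (g : A) {d n : ℕ} (h : n < d) : PowerSeries.coeff (R := ℂ) n (g * Xs ^ d) = 0 := by
  obtain ⟨h', rfl⟩ := PowerSeries.X_dvd_iff.mpr hX0
  have : g * (PowerSeries.X * h') ^ d = PowerSeries.X ^ d * (g * h' ^ d) := by ring
  rw [this, PowerSeries.coeff_mul]
  apply Finset.sum_eq_zero
  intro p hp
  have hp' := Finset.HasAntidiagonal.mem_antidiagonal.mp hp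
  rw [PowerSeries.coeff_X_pow, if_neg (by omega), zero_mul]

/-- Truncated sums `Σ_{d ≤ N} U_{k+d} X^d`. -/
noncomputable def Wsum (Xs : A) (U : B) (k N : ℕ) : A :=
  ∑ d ∈ Finset.range (N + 1), PowerSeries.coeff (R := PowerSeries ℂ) (k + d) U * Xs ^ d

lemma coeff_Wsum_stable {Xs : A} (hX0 : PowerSeries.constantCoeff (R := ℂ) Xs = 0)
    (U : B) (k : ℕ) {n N : ℕ} (h : n ≤ N) :
    PowerSeries.coeff (R := ℂ) n (Wsum Xs U k N) = PowerSeries.coeff (R := ℂ) n (Wsum Xs U k n) := by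
  unfold Wsum
  rw [map_sum, map_sum]
  symm
  apply Finset.sum_subset
  · exact Finset.range_subset_range.mpr (by omega)
  · intro d _ hd
    rw [Finset.mem_range, not_lt] at hd
    exact coeff_mul_pow_eq_zero hX0 _ (by omega)

lemma coeff_evB (Xs : A) (U : B) (n : ℕ) :
    PowerSeries.coeff (R := ℂ) n (evB Xs U) = PowerSeries.coeff (R := ℂ) n (Wsum Xs U 0 n) := by
  simp [evB, Wsum, PowerSeries.coeff_mk, map_sum]

lemma coeff_Wsum_succ {Xs : A} (hX0 : PowerSeries.constantCoeff (R := ℂ) Xs = 0)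
    (U : B) (k m : ℕ) :
    PowerSeries.coeff (R := ℂ) m (Wsum Xs U k m) =
      PowerSeries.coeff (R := ℂ) m (PowerSeries.coeff (R := PowerSeries ℂ) k U) +
        PowerSeries.coeff (R := ℂ) m (Xs * Wsum Xs U (k + 1) m) := by
  unfold Wsum
  rw [Finset.sum_range_succ', Finset.mul_sum, Finset.sum_range_succ]
  rw [map_add, map_add, map_sum, map_sum]
  have hlast : PowerSeries.coeff (R := ℂ) m (Xs * (PowerSeries.coeff (R := PowerSeries ℂ) (k + 1 + m) U * Xs ^ m)) = 0 := by
    have : Xs * (PowerSeries.coeff (R := PowerSeries ℂ) (k + 1 + m) U * Xs ^ m) =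
        PowerSeries.coeff (R := PowerSeries ℂ) (k + 1 + m) U * Xs ^ (m + 1) := by ring
    rw [this]
    exact coeff_mul_pow_eq_zero hX0 _ (by omega)
  rw [hlast, add_zero]
  have hterm : ∀ d, PowerSeries.coeff (R := ℂ) m (PowerSeries.coeff (R := PowerSeries ℂ) (k + (d + 1)) U * Xs ^ (d + 1)) =
      PowerSeries.coeff (R := ℂ) m (Xs * (PowerSeries.coeff (R := PowerSeries ℂ) (k + 1 + d) U * Xs ^ d)) := by
    intro d
    congr 1
    rw [show k + (d + 1) = k + 1 + d by omega]
    ring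
  rw [Finset.sum_congr rfl fun d _ => hterm d]
  simp [add_comm]

/-- The quotient by `x − X(y)`. -/
noncomputable def qdiv (Xs : A) (U : B) : B :=
  PowerSeries.mk fun k => PowerSeries.mk fun m => PowerSeries.coeff (R := ℂ) m (Wsum Xs U (k + 1) m)

lemma coeff_qdiv (Xs : A) (U : B) (k m : ℕ) :
    PowerSeries.coeff (R := ℂ) m (PowerSeries.coeff (R := PowerSeries ℂ) k (qdiv Xs U)) =
      PowerSeries.coeff (R := ℂ) m (Wsum Xs U (k + 1) m) := by
  simp [qdiv, PowerSeries.coeff_mk]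

lemma coeff_mul_q {Xs : A} (hX0 : PowerSeries.constantCoeff (R := ℂ) Xs = 0)
    (U : B) (k m : ℕ) :
    PowerSeries.coeff (R := ℂ) m (Xs * PowerSeries.coeff (R := PowerSeries ℂ) k (qdiv Xs U)) =
      PowerSeries.coeff (R := ℂ) m (Xs * Wsum Xs U (k + 1) m) := by
  rw [PowerSeries.coeff_mul, PowerSeries.coeff_mul]
  refine Finset.sum_congr rfl fun p hp => ?_
  have hp2 : p.2 ≤ m := by have := Finset.HasAntidiagonal.mem_antidiagonal.mp hp; omega
  congr 1
  rw [coeff_qdiv]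
  exact (coeff_Wsum_stable hX0 U (k + 1) hp2).symm

lemma fac {Xs : A} (hX0 : PowerSeries.constantCoeff (R := ℂ) Xs = 0)
    (U : B) (hU : evB Xs U = 0) :
    (PowerSeries.X - PowerSeries.C (R := PowerSeries ℂ) Xs) * qdiv Xs U = U := by
  apply PowerSeries.ext; intro k
  rw [sub_mul, map_sub, PowerSeries.coeff_C_mul]
  cases k with
  | zero =>
    rw [PowerSeries.coeff_zero_X_mul]
    apply PowerSeries.ext; intro m
    have h1 := coeff_mul_q hX0 U 0 m
    have h2 := coeff_Wsum_succ hX0 U 0 m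
    have h3 : PowerSeries.coeff (R := ℂ) m (Wsum Xs U 0 m) = 0 := by
      rw [← coeff_evB, hU, map_zero]
    rw [map_sub, map_zero, h1]
    linear_combination h2 - h3
  | succ k =>
    rw [PowerSeries.coeff_succ_X_mul]
    apply PowerSeries.ext; intro m
    have h1 := coeff_mul_q hX0 U (k + 1) m
    have h2 := coeff_Wsum_succ hX0 U (k + 1) m
    rw [map_sub, coeff_qdiv, h1]
    linear_combination h2

lemma evB_sub (Xs : A) (U V : B) : evB Xs (U - V) = evB Xs U - evB Xs V := by
  apply PowerSeries.ext; intro n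
  simp [evB, PowerSeries.coeff_mk, map_sub, sub_mul, Finset.sum_sub_distrib]

lemma evB_C (Xs : A) (u : A) : evB Xs (PowerSeries.C (R := PowerSeries ℂ) u) = u := by
  apply PowerSeries.ext; intro n
  rw [evB, PowerSeries.coeff_mk]
  rw [Finset.sum_eq_single 0]
  · simp
  · intro a _ ha
    rw [PowerSeries.coeff_C, if_neg ha, zero_mul, map_zero]
  · intro h
    exact absurd (Finset.mem_range.mpr (by omega)) h

lemma Wsum_C_mul (Xs : A) (u : A) (U : B) (k N : ℕ) :
    Wsum Xs (PowerSeries.C (R := PowerSeries ℂ) u * U) k N = u * Wsum Xs U k N := by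
  unfold Wsum
  rw [Finset.mul_sum]
  refine Finset.sum_congr rfl fun d _ => ?_
  rw [PowerSeries.coeff_C_mul]
  ring

lemma coeff_mul_evB {Xs : A} (hX0 : PowerSeries.constantCoeff (R := ℂ) Xs = 0)
    (u : A) (U : B) (n : ℕ) :
    PowerSeries.coeff (R := ℂ) n (u * evB Xs U) = PowerSeries.coeff (R := ℂ) n (u * Wsum Xs U 0 n) := by
  rw [PowerSeries.coeff_mul, PowerSeries.coeff_mul]
  refine Finset.sum_congr rfl fun p hp => ?_
  have hp2 : p.2 ≤ n := by have := Finset.HasAntidiagonal.mem_antidiagonal.mp hp; omega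
  congr 1
  rw [coeff_evB]
  exact (coeff_Wsum_stable hX0 U 0 hp2).symm

lemma evB_C_mul {Xs : A} (hX0 : PowerSeries.constantCoeff (R := ℂ) Xs = 0) (u : A) (U : B) :
    evB Xs (PowerSeries.C (R := PowerSeries ℂ) u * U) = u * evB Xs U := by
  apply PowerSeries.ext; intro n
  rw [coeff_evB, Wsum_C_mul, coeff_mul_evB hX0]

lemma evB_X_mul {Xs : A} (hX0 : PowerSeries.constantCoeff (R := ℂ) Xs = 0) (U : B) :
    evB Xs (PowerSeries.X * U) = Xs * evB Xs U := by
  apply PowerSeries.ext; intro n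
  rw [coeff_mul_evB hX0]
  rw [evB, PowerSeries.coeff_mk, Finset.sum_range_succ']
  rw [PowerSeries.coeff_zero_X_mul, zero_mul, map_zero, add_zero]
  unfold Wsum
  rw [Finset.mul_sum, map_sum, Finset.sum_range_succ]
  have hlast : PowerSeries.coeff (R := ℂ) n (Xs * (PowerSeries.coeff (R := PowerSeries ℂ) (0 + n) U * Xs ^ n)) = 0 := by
    have : Xs * (PowerSeries.coeff (R := PowerSeries ℂ) (0 + n) U * Xs ^ n) =
        PowerSeries.coeff (R := PowerSeries ℂ) (0 + n) U * Xs ^ (n + 1) := by ring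
    rw [this]
    exact coeff_mul_pow_eq_zero hX0 _ (by omega)
  rw [hlast, add_zero]
  refine Finset.sum_congr rfl fun a _ => ?_
  rw [PowerSeries.coeff_succ_X_mul]
  congr 1
  rw [zero_add]
  ring

lemma coeff_single_CXX (c : ℂ) (s t i : ℕ) :
    MvPowerSeries.coeff (R := ℂ) (Finsupp.single 0 i)
      (MvPowerSeries.C (σ := Fin 2) (R := ℂ) c * MvPowerSeries.X 0 ^ s * MvPowerSeries.X 1 ^ t) =
      if i = s ∧ t = 0 then c else 0 := by
  classical
  have h1 : (MvPowerSeries.C (σ := Fin 2) (R := ℂ) c * MvPowerSeries.X 0 ^ s * MvPowerSeries.X 1 ^ t :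
      MvPowerSeries (Fin 2) ℂ) =
      MvPowerSeries.monomial (R := ℂ) (Finsupp.single 0 s + Finsupp.single 1 t) c := by
    rw [MvPowerSeries.X_pow_eq, MvPowerSeries.X_pow_eq, show (MvPowerSeries.C (σ := Fin 2) (R := ℂ) c) =
      MvPowerSeries.monomial (R := ℂ) 0 c from rfl, MvPowerSeries.monomial_mul_monomial,
      MvPowerSeries.monomial_mul_monomial]
    rw [zero_add, mul_one, mul_one]
  rw [h1, MvPowerSeries.coeff_monomial]
  by_cases h : i = s ∧ t = 0
  · rw [if_pos ((single_eq_pair_iff i s t).mpr h), if_pos h]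
  · rw [if_neg (fun hc => h ((single_eq_pair_iff i s t).mp hc)), if_neg h]

lemma grid_sum_eq (f : ℤ × ℤ → ℂ) : ∑ uv ∈ SmallStepGrid, f uv =
    f (-1,-1) + f (-1,0) + f (-1,1) + f (0,-1) + f (0,0) + f (0,1) +
      f (1,-1) + f (1,0) + f (1,1) := by
  rw [SmallStepGrid, Finset.sum_product]
  norm_num [Finset.sum_insert, Finset.mem_insert, Finset.mem_singleton]
  ring

lemma coeff_xy_single (i : ℕ) :
    MvPowerSeries.coeff (R := ℂ) (Finsupp.single 0 i)
      (MvPowerSeries.X 0 * MvPowerSeries.X 1 : MvPowerSeries (Fin 2) ℂ) = 0 := by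
  have h : (MvPowerSeries.X 0 * MvPowerSeries.X 1 : MvPowerSeries (Fin 2) ℂ) =
      MvPowerSeries.C (σ := Fin 2) (R := ℂ) 1 * MvPowerSeries.X 0 ^ 1 * MvPowerSeries.X 1 ^ 1 := by
    simp
  rw [h, coeff_single_CXX]
  simp

lemma kernel_coeff_zero (M : SmallStepModel) (hK00 : M.p 1 1 = 0) (i : ℕ)
    (h1 : i ≠ 1) (h2 : i ≠ 2) :
    MvPowerSeries.coeff (R := ℂ) (Finsupp.single 0 i) (kernelPS M) = 0 := by
  rw [kernelPS, map_sub, map_sum, coeff_xy_single, sub_zero]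
  rw [grid_sum_eq (fun uv => MvPowerSeries.coeff (R := ℂ) (Finsupp.single 0 i)
    (MvPowerSeries.C (σ := Fin 2) (R := ℂ) ((M.p uv.1 uv.2 : ℝ) : ℂ) *
      MvPowerSeries.X 0 ^ (1 - uv.1).toNat * MvPowerSeries.X 1 ^ (1 - uv.2).toNat))]
  simp only [coeff_single_CXX]
  norm_num [show Int.toNat 2 = 2 from rfl, h1, h2, hK00]

lemma kernel_coeff_one (M : SmallStepModel) :
    MvPowerSeries.coeff (R := ℂ) (Finsupp.single 0 1) (kernelPS M) = ((M.p 0 1 : ℝ) : ℂ) := by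
  rw [kernelPS, map_sub, map_sum, coeff_xy_single, sub_zero]
  rw [grid_sum_eq (fun uv => MvPowerSeries.coeff (R := ℂ) (Finsupp.single 0 1)
    (MvPowerSeries.C (σ := Fin 2) (R := ℂ) ((M.p uv.1 uv.2 : ℝ) : ℂ) *
      MvPowerSeries.X 0 ^ (1 - uv.1).toNat * MvPowerSeries.X 1 ^ (1 - uv.2).toNat))]
  simp only [coeff_single_CXX]
  norm_num [show Int.toNat 2 = 2 from rfl]

end KernelAux

/-- If `K(0,0) = 0` (i.e. `p_{1,1} = 0`), `(∂K/∂x)(0,0) ≠ 0` (i.e. `p_{0,1} ≠ 0`) and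
`X ∈ ℂ[[y]]` satisfies `X(0) = 0` and `K(X(y), y) = 0`, then for every
`G ∈ ℂ[[x,y]]` the kernel `K` divides `X(y)·y·G(X(y), y) − x·y·G(x,y)` in `ℂ[[x,y]]`,
and the quotient `H` (defined by `K·H` being equal to this series) satisfies
`H(x,0) = 0`. -/
theorem kernel_divides_substituted_series (M : SmallStepModel)
    (hK00 : M.p 1 1 = 0) (hKdx : M.p 0 1 ≠ 0)
    (Xs : PowerSeries ℂ) (hX0 : PowerSeries.constantCoeff (R := ℂ) Xs = 0)
    (hKX : substXY Xs (kernelPS M) = 0)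
    (G : MvPowerSeries (Fin 2) ℂ) :
    ∃ H : MvPowerSeries (Fin 2) ℂ,
      embedY (Xs * PowerSeries.X * substXY Xs G) - MvPowerSeries.X 0 * MvPowerSeries.X 1 * G
        = kernelPS M * H ∧
      ∀ n : ℕ, MvPowerSeries.coeff (R := ℂ) (Finsupp.single 0 n) H = 0 := by
  classical
  open KernelAux PowerSeries in
  -- abbreviations
  set K : MvPowerSeries (Fin 2) ℂ := kernelPS M with hKdef
  set W : PowerSeries ℂ := Xs * PowerSeries.X * substXY Xs G with hWdef
  set F : MvPowerSeries (Fin 2) ℂ :=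
    embedY W - MvPowerSeries.X 0 * MvPowerSeries.X 1 * G with hFdef
  set V : PowerSeries (PowerSeries ℂ) :=
    PowerSeries.C (R := PowerSeries ℂ) W -
      PowerSeries.X * (PowerSeries.C (R := PowerSeries ℂ) PowerSeries.X * phi G) with hVdef
  have hphiF : phi F = V := by
    rw [hFdef, phi_sub, phi_embedY, phi_mul, phi_mul, phi_X0, phi_X1, hVdef, mul_assoc]
  have hKXB : evB Xs (phi K) = 0 := by rw [← substXY_eq]; exact hKX
  have hEV : evB Xs V = 0 := by
    rw [hVdef, evB_sub, evB_C, evB_X_mul hX0, evB_C_mul hX0, hWdef, substXY_eq]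
    ring
  have hQ := fac hX0 (phi K) hKXB
  have hR := fac hX0 V hEV
  -- the cofactor is a unit
  have hk1 : PowerSeries.coeff (R := ℂ) 0 (PowerSeries.coeff (R := PowerSeries ℂ) 1 (phi K)) =
      ((M.p 0 1 : ℝ) : ℂ) := by
    rw [coeff_phi]
    have : (Finsupp.single (0:Fin 2) 1 + Finsupp.single 1 0) = Finsupp.single (0:Fin 2) 1 := by simp
    rw [this]
    exact kernel_coeff_one M
  have hu : IsUnit (qdiv Xs (phi K)) := by
    rw [PowerSeries.isUnit_iff_constantCoeff, PowerSeries.isUnit_iff_constantCoeff]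
    have hval : PowerSeries.constantCoeff (R := ℂ)
        (PowerSeries.constantCoeff (R := PowerSeries ℂ) (qdiv Xs (phi K))) = ((M.p 0 1 : ℝ) : ℂ) := by
      rw [← PowerSeries.coeff_zero_eq_constantCoeff, ← PowerSeries.coeff_zero_eq_constantCoeff,
        coeff_qdiv]
      rw [show Wsum Xs (phi K) 1 0 = PowerSeries.coeff (R := PowerSeries ℂ) 1 (phi K) * Xs ^ 0 from by
        simp [Wsum]]
      rw [pow_zero, mul_one]
      exact hk1
    rw [hval]
    exact isUnit_iff_ne_zero.mpr (by exact_mod_cast hKdx)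
  obtain ⟨uQ, huQ⟩ := hu
  set H' : PowerSeries (PowerSeries ℂ) := (↑uQ⁻¹ : PowerSeries (PowerSeries ℂ)) * qdiv Xs V
    with hH'def
  have hmain : phi K * H' = V := by
    calc phi K * H'
        = ((PowerSeries.X - PowerSeries.C (R := PowerSeries ℂ) Xs) * qdiv Xs (phi K)) *
            ((↑uQ⁻¹ : PowerSeries (PowerSeries ℂ)) * qdiv Xs V) := by rw [hQ]
      _ = ((PowerSeries.X - PowerSeries.C (R := PowerSeries ℂ) Xs) * qdiv Xs V) *
            (qdiv Xs (phi K) * (↑uQ⁻¹ : PowerSeries (PowerSeries ℂ))) := by ring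
      _ = V * 1 := by rw [hR, ← huQ, Units.mul_inv]
      _ = V := mul_one V
  refine ⟨psi H', ?_, ?_⟩
  · have hFpsi : F = psi V := by rw [← hphiF, psi_phi]
    rw [hFpsi, ← hmain, psi_mul, psi_phi]
  · -- the coefficient recursion
    intro n
    have hgen : ∀ m, PowerSeries.coeff (R := ℂ) 0 (PowerSeries.coeff (R := PowerSeries ℂ) m H') = 0 := by
      have hκ : ∀ i, i ≠ 1 → i ≠ 2 →
          PowerSeries.coeff (R := ℂ) 0 (PowerSeries.coeff (R := PowerSeries ℂ) i (phi K)) = 0 := by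
        intro i hi1 hi2
        rw [coeff_phi]
        have : (Finsupp.single (0:Fin 2) i + Finsupp.single 1 0) = Finsupp.single (0:Fin 2) i := by
          simp
        rw [this]
        exact kernel_coeff_zero M hK00 i hi1 hi2
      have hV0 : ∀ m, PowerSeries.coeff (R := ℂ) 0 (PowerSeries.coeff (R := PowerSeries ℂ) m V) = 0 := by
        intro m
        rw [hVdef]
        cases m with
        | zero =>
          simp only [map_sub, PowerSeries.coeff_zero_X_mul, map_zero, sub_zero,
            PowerSeries.coeff_zero_C]
          rw [hWdef]
          rw [PowerSeries.coeff_zero_eq_constantCoeff, map_mul, map_mul,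
            PowerSeries.constantCoeff_X]
          ring
        | succ m =>
          simp only [map_sub, PowerSeries.coeff_succ_X_mul, PowerSeries.coeff_C]
          rw [if_neg (Nat.succ_ne_zero m), map_zero, zero_sub, PowerSeries.coeff_C_mul]
          rw [PowerSeries.coeff_zero_eq_constantCoeff, map_mul, PowerSeries.constantCoeff_X]
          ring
      have heqn : ∀ m, ∑ i ∈ Finset.range (m + 1),
          PowerSeries.coeff (R := ℂ) 0 (PowerSeries.coeff (R := PowerSeries ℂ) i (phi K)) *
            PowerSeries.coeff (R := ℂ) 0 (PowerSeries.coeff (R := PowerSeries ℂ) (m - i) H') = 0 := by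
        intro m
        have := congrArg (fun U => PowerSeries.coeff (R := ℂ) 0 (PowerSeries.coeff (R := PowerSeries ℂ) m U))
          hmain
        rw [PowerSeries.coeff_mul, map_sum] at this
        rw [Finset.Nat.sum_antidiagonal_eq_sum_range_succ_mk] at this
        rw [hV0 m] at this
        rw [← this]
        refine Finset.sum_congr rfl fun i _ => ?_
        simp only [PowerSeries.coeff_zero_eq_constantCoeff, map_mul]
      have hκ1 : PowerSeries.coeff (R := ℂ) 0 (PowerSeries.coeff (R := PowerSeries ℂ) 1 (phi K)) ≠ 0 := by
        rw [hk1]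
        exact_mod_cast hKdx
      intro m
      induction m using Nat.strong_induction_on with
      | _ m ih =>
        have := heqn (m + 1)
        have hsum : ∑ i ∈ Finset.range (m + 2),
            PowerSeries.coeff (R := ℂ) 0 (PowerSeries.coeff (R := PowerSeries ℂ) i (phi K)) *
              PowerSeries.coeff (R := ℂ) 0 (PowerSeries.coeff (R := PowerSeries ℂ) (m + 1 - i) H') =
            PowerSeries.coeff (R := ℂ) 0 (PowerSeries.coeff (R := PowerSeries ℂ) 1 (phi K)) *
              PowerSeries.coeff (R := ℂ) 0 (PowerSeries.coeff (R := PowerSeries ℂ) m H') := by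
          rw [Finset.sum_eq_single 1]
          · norm_num
          · intro i hi hne
            by_cases h2 : i = 2
            · subst h2
              have hm : 1 ≤ m := by
                rw [Finset.mem_range] at hi; omega
              rw [show m + 1 - 2 = m - 1 from by omega, ih (m - 1) (by omega), mul_zero]
            · rw [hκ i hne h2, zero_mul]
          · intro h
            exact absurd (Finset.mem_range.mpr (by omega)) h
        rw [hsum] at this
        exact (mul_eq_zero.mp this).resolve_left hκ1
    have : MvPowerSeries.coeff (R := ℂ) (Finsupp.single 0 n) (psi H') =
        PowerSeries.coeff (R := ℂ) ((Finsupp.single (0:Fin 2) n) 1)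
          (PowerSeries.coeff (R := PowerSeries ℂ) ((Finsupp.single (0:Fin 2) n) 0) H') := rfl
    rw [this]
    have h0 : (Finsupp.single (0:Fin 2) n) 0 = n := by simp
    have h1 : (Finsupp.single (0:Fin 2) n) 1 = 0 := by simp [Finsupp.single_apply]
    rw [h0, h1]
    exact hgen n
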